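/- Let PM₂ denote the quotient of the 2 × 2 integer matrices by the identification M ∼ −M, and let [minus], [rot], [star] denote the bijections of PM₂ induced by minus([[α,γ],[β,δ]]) = [[δ,γ],[β,α]], rot([[α,γ],[β,δ]]) = [[−γ,α],[−δ,β]], star([[α,γ],[β,δ]]) = [[α,−γ],[−β,δ]]. Let G(F) be the subgroup of the permutation group of PM₂ generated by [minus], [rot], [star]. Then G(F) is isomorphic to the group presented on three generators x, y, z with relators x², y², z², (xyxy)(yxyx)⁻¹, xz x⁻¹z⁻¹, yz y⁻¹z⁻¹ (i.e. ⟨x, y, z | x² = y² = z² = 1, xyxy = yxyx, xz = zx, yz = zy⟩), via an isomorphism sending x to [minus], y to [rot], and z to [star]. -/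

import Mathlib

open Matrix

/-- The operation on invariants induced by taking the mirror image `S*`. -/
def starOp (M : Matrix (Fin 2) (Fin 2) ℤ) : Matrix (Fin 2) (Fin 2) ℤ :=
  !![M 0 0, -M 0 1; -M 1 0, M 1 1]

/-- The operation on invariants induced by interchanging inner and outer holes `S⁻`. -/
def minusOp (M : Matrix (Fin 2) (Fin 2) ℤ) : Matrix (Fin 2) (Fin 2) ℤ :=
  !![M 1 1, M 0 1; M 1 0, M 0 0]

/-- The operation on invariants induced by rotating the inner hole 90° counterclockwise. -/
def rotOp (M : Matrix (Fin 2) (Fin 2) ℤ) : Matrix (Fin 2) (Fin 2) ℤ :=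
  !![-M 0 1, M 0 0; -M 1 1, M 1 0]

/-- The setoid on `2 × 2` integer matrices identifying `M` with `-M`. -/
def pmSetoid : Setoid (Matrix (Fin 2) (Fin 2) ℤ) where
  r M N := M = N ∨ M = -N
  iseqv := by
    constructor
    · exact fun _ => Or.inl rfl
    · rintro M N (rfl | rfl)
      · exact Or.inl rfl
      · exact Or.inr (neg_neg N).symm
    · rintro M N P (rfl | rfl) (rfl | rfl) <;> simp

/-- `PM_{2×2}(ℤ)`: `2 × 2` integer matrices modulo multiplication by `±1`. -/
def PM2 : Type := Quotient pmSetoid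

lemma starOp_neg (M : Matrix (Fin 2) (Fin 2) ℤ) : starOp (-M) = -(starOp M) := by
  ext i j; fin_cases i <;> fin_cases j <;> simp [starOp]

lemma minusOp_neg (M : Matrix (Fin 2) (Fin 2) ℤ) : minusOp (-M) = -(minusOp M) := by
  ext i j; fin_cases i <;> fin_cases j <;> simp [minusOp]

lemma rotOp_neg (M : Matrix (Fin 2) (Fin 2) ℤ) : rotOp (-M) = -(rotOp M) := by
  ext i j; fin_cases i <;> fin_cases j <;> simp [rotOp]

lemma starOp_starOp (M : Matrix (Fin 2) (Fin 2) ℤ) : starOp (starOp M) = M := by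
  ext i j; fin_cases i <;> fin_cases j <;> simp [starOp]

lemma minusOp_minusOp (M : Matrix (Fin 2) (Fin 2) ℤ) : minusOp (minusOp M) = M := by
  ext i j; fin_cases i <;> fin_cases j <;> simp [minusOp]

lemma rotOp_rotOp (M : Matrix (Fin 2) (Fin 2) ℤ) : rotOp (rotOp M) = -M := by
  ext i j; fin_cases i <;> fin_cases j <;> simp [rotOp]

private lemma respects (f : Matrix (Fin 2) (Fin 2) ℤ → Matrix (Fin 2) (Fin 2) ℤ)
    (hf : ∀ M, f (-M) = -(f M)) :
    ∀ M N, pmSetoid.r M N → pmSetoid.r (f M) (f N) := by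
  rintro M N (rfl | rfl)
  · exact Or.inl rfl
  · exact Or.inr (hf N)

/-- The bijection of `PM2` induced by `starOp`. -/
def qStar : Equiv.Perm PM2 where
  toFun := Quotient.map starOp (respects starOp starOp_neg)
  invFun := Quotient.map starOp (respects starOp starOp_neg)
  left_inv := by
    intro q
    induction q using Quotient.inductionOn with
    | h M => exact congrArg (Quotient.mk pmSetoid) (starOp_starOp M)
  right_inv := by
    intro q
    induction q using Quotient.inductionOn with
    | h M => exact congrArg (Quotient.mk pmSetoid) (starOp_starOp M)

/-- The bijection of `PM2` induced by `minusOp`. -/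
def qMinus : Equiv.Perm PM2 where
  toFun := Quotient.map minusOp (respects minusOp minusOp_neg)
  invFun := Quotient.map minusOp (respects minusOp minusOp_neg)
  left_inv := by
    intro q
    induction q using Quotient.inductionOn with
    | h M => exact congrArg (Quotient.mk pmSetoid) (minusOp_minusOp M)
  right_inv := by
    intro q
    induction q using Quotient.inductionOn with
    | h M => exact congrArg (Quotient.mk pmSetoid) (minusOp_minusOp M)

/-- The bijection of `PM2` induced by `rotOp` (an involution on the quotient,
since `rotOp (rotOp M) = -M ∼ M`). -/
def qRot : Equiv.Perm PM2 where
  toFun := Quotient.map rotOp (respects rotOp rotOp_neg)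
  invFun := Quotient.map rotOp (respects rotOp rotOp_neg)
  left_inv := by
    intro q
    induction q using Quotient.inductionOn with
    | h M => exact Quotient.sound (by rw [rotOp_rotOp]; exact Or.inr rfl)
  right_inv := by
    intro q
    induction q using Quotient.inductionOn with
    | h M => exact Quotient.sound (by rw [rotOp_rotOp]; exact Or.inr rfl)


/-- The relators `x², y², z², xyxy(yxyx)⁻¹, xzx⁻¹z⁻¹, yzy⁻¹z⁻¹` on three generators. -/
def rels : Set (FreeGroup (Fin 3)) :=
  { FreeGroup.of 0 ^ 2, FreeGroup.of 1 ^ 2, FreeGroup.of 2 ^ 2,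
    (FreeGroup.of 0 * FreeGroup.of 1 * FreeGroup.of 0 * FreeGroup.of 1) *
      (FreeGroup.of 1 * FreeGroup.of 0 * FreeGroup.of 1 * FreeGroup.of 0)⁻¹,
    FreeGroup.of 0 * FreeGroup.of 2 * (FreeGroup.of 0)⁻¹ * (FreeGroup.of 2)⁻¹,
    FreeGroup.of 1 * FreeGroup.of 2 * (FreeGroup.of 1)⁻¹ * (FreeGroup.of 2)⁻¹ }
section GFProof

open PresentedGroup

instance : DecidableEq PM2 := fun a b =>
  Quotient.recOnSubsingleton₂ a b fun M N =>
    decidable_of_iff (M = N ∨ M = -N) (Quotient.eq (r := pmSetoid)).symm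

lemma qMinus_mk (M : Matrix (Fin 2) (Fin 2) ℤ) :
    qMinus (Quotient.mk pmSetoid M) = Quotient.mk pmSetoid (minusOp M) := rfl

lemma qRot_mk (M : Matrix (Fin 2) (Fin 2) ℤ) :
    qRot (Quotient.mk pmSetoid M) = Quotient.mk pmSetoid (rotOp M) := rfl

lemma qStar_mk (M : Matrix (Fin 2) (Fin 2) ℤ) :
    qStar (Quotient.mk pmSetoid M) = Quotient.mk pmSetoid (starOp M) := rfl

lemma qMinus_sq : qMinus * qMinus = 1 := by
  ext q; induction q using Quotient.inductionOn with
  | h M => exact congrArg (Quotient.mk pmSetoid) (minusOp_minusOp M)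

lemma qRot_sq : qRot * qRot = 1 := by
  ext q; induction q using Quotient.inductionOn with
  | h M =>
    show Quotient.mk pmSetoid (rotOp (rotOp M)) = Quotient.mk pmSetoid M
    rw [rotOp_rotOp]; exact Quotient.sound (Or.inr rfl)

lemma qStar_sq : qStar * qStar = 1 := by
  ext q; induction q using Quotient.inductionOn with
  | h M => exact congrArg (Quotient.mk pmSetoid) (starOp_starOp M)

lemma qMinus_qStar_comm : qMinus * qStar = qStar * qMinus := by
  ext q; induction q using Quotient.inductionOn with
  | h M =>
    show Quotient.mk pmSetoid (minusOp (starOp M)) = Quotient.mk pmSetoid (starOp (minusOp M))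
    exact congrArg _ (by ext i j; fin_cases i <;> fin_cases j <;> simp [minusOp, starOp])

lemma qRot_qStar_comm : qRot * qStar = qStar * qRot := by
  ext q; induction q using Quotient.inductionOn with
  | h M =>
    show Quotient.mk pmSetoid (rotOp (starOp M)) = Quotient.mk pmSetoid (starOp (rotOp M))
    refine Quotient.sound (Or.inr ?_)
    ext i j; fin_cases i <;> fin_cases j <;> simp [rotOp, starOp]

lemma q_braid : qMinus * qRot * qMinus * qRot = qRot * qMinus * qRot * qMinus := by
  ext q; induction q using Quotient.inductionOn with
  | h M =>
    show Quotient.mk pmSetoid (minusOp (rotOp (minusOp (rotOp M)))) =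
      Quotient.mk pmSetoid (rotOp (minusOp (rotOp (minusOp M))))
    exact congrArg _ (by ext i j; fin_cases i <;> fin_cases j <;> simp [minusOp, rotOp])

/-- The assignment of generators. -/
def f3 : Fin 3 → Equiv.Perm PM2
  | 0 => qMinus
  | 1 => qRot
  | 2 => qStar

lemma hrels : ∀ r ∈ rels, FreeGroup.lift f3 r = 1 := by
  intro r hr
  simp only [rels, Set.mem_insert_iff, Set.mem_singleton_iff] at hr
  rcases hr with rfl | rfl | rfl | rfl | rfl | rfl <;>
    simp only [_root_.map_mul, _root_.map_pow, _root_.map_inv, FreeGroup.lift_apply_of]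
  · rw [pow_two]; exact (show f3 0 = qMinus from rfl) ▸ qMinus_sq
  · rw [pow_two]; exact qRot_sq
  · rw [pow_two]; exact qStar_sq
  · rw [mul_inv_eq_one]; exact q_braid
  · exact commutatorElement_eq_one_iff_mul_comm.mpr qMinus_qStar_comm
  · exact commutatorElement_eq_one_iff_mul_comm.mpr qRot_qStar_comm

end GFProof
section GFProof2

open PresentedGroup

/-- The images of the three generators in the presented group. -/
def px : PresentedGroup rels := PresentedGroup.of 0
def py : PresentedGroup rels := PresentedGroup.of 1
def pz : PresentedGroup rels := PresentedGroup.of 2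

lemma relp {r : FreeGroup (Fin 3)} (hr : r ∈ rels) : PresentedGroup.mk rels r = 1 := by
  have : r ∈ Subgroup.normalClosure rels := Subgroup.subset_normalClosure hr
  exact (QuotientGroup.eq_one_iff r).mpr this

lemma hx2 : px * px = 1 := by
  have := relp (show FreeGroup.of 0 ^ 2 ∈ rels by simp [rels])
  rwa [pow_two, _root_.map_mul] at this

lemma hy2 : py * py = 1 := by
  have := relp (show FreeGroup.of 1 ^ 2 ∈ rels by simp [rels])
  rwa [pow_two, _root_.map_mul] at this

lemma hz2 : pz * pz = 1 := by
  have := relp (show FreeGroup.of 2 ^ 2 ∈ rels by simp [rels])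
  rwa [pow_two, _root_.map_mul] at this

lemma hbraid : px * py * px * py = py * px * py * px := by
  have := relp (show (FreeGroup.of 0 * FreeGroup.of 1 * FreeGroup.of 0 * FreeGroup.of 1) *
      (FreeGroup.of 1 * FreeGroup.of 0 * FreeGroup.of 1 * FreeGroup.of 0)⁻¹ ∈ rels by simp [rels])
  rw [_root_.map_mul, _root_.map_inv, mul_inv_eq_one] at this
  simp only [_root_.map_mul] at this
  exact this

lemma hxz : px * pz = pz * px := by
  have := relp (show FreeGroup.of 0 * FreeGroup.of 2 * (FreeGroup.of 0)⁻¹ * (FreeGroup.of 2)⁻¹ ∈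
    rels by simp [rels])
  simp only [_root_.map_mul, _root_.map_inv] at this
  exact commutatorElement_eq_one_iff_mul_comm.mp this

lemma hyz : py * pz = pz * py := by
  have := relp (show FreeGroup.of 1 * FreeGroup.of 2 * (FreeGroup.of 1)⁻¹ * (FreeGroup.of 2)⁻¹ ∈
    rels by simp [rels])
  simp only [_root_.map_mul, _root_.map_inv] at this
  exact commutatorElement_eq_one_iff_mul_comm.mp this

lemma xinv : px⁻¹ = px := inv_eq_of_mul_eq_one_right hx2
lemma yinv : py⁻¹ = py := inv_eq_of_mul_eq_one_right hy2
lemma zinv : pz⁻¹ = pz := inv_eq_of_mul_eq_one_right hz2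

lemma lxx (t : PresentedGroup rels) : px * (px * t) = t := by rw [← mul_assoc, hx2, one_mul]
lemma lyy (t : PresentedGroup rels) : py * (py * t) = t := by rw [← mul_assoc, hy2, one_mul]
lemma lzz (t : PresentedGroup rels) : pz * (pz * t) = t := by rw [← mul_assoc, hz2, one_mul]
lemma lxzt (t : PresentedGroup rels) : px * (pz * t) = pz * (px * t) := by
  rw [← mul_assoc, hxz, mul_assoc]
lemma lyzt (t : PresentedGroup rels) : py * (pz * t) = pz * (py * t) := by
  rw [← mul_assoc, hyz, mul_assoc]
lemma bt (t : PresentedGroup rels) :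
    py * (px * (py * (px * t))) = px * (py * (px * (py * t))) := by
  simp only [← mul_assoc]; rw [← hbraid]
lemma b2 : py * (px * (py * px)) = px * (py * (px * py)) := by
  simp only [← mul_assoc]; exact hbraid.symm

/-- The sixteen candidate normal forms. -/
def S : Set (PresentedGroup rels) :=
  {1, px, py, px * py, py * px, px * py * px, py * px * py, px * py * px * py,
   pz, pz * px, pz * py, pz * (px * py), pz * (py * px), pz * (px * py * px),
   pz * (py * px * py), pz * (px * py * px * py)}

lemma hxS : ∀ s ∈ S, px * s ∈ S := by
  intro s hs
  simp only [S, Set.mem_insert_iff, Set.mem_singleton_iff] at hs ⊢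
  rcases hs with rfl|rfl|rfl|rfl|rfl|rfl|rfl|rfl|rfl|rfl|rfl|rfl|rfl|rfl|rfl|rfl <;>
    simp only [mul_one, one_mul, mul_assoc, lxx, lyy, lzz, lxzt, lyzt, bt, b2,
      hx2, hy2, hz2, hxz, hyz] <;> tauto

lemma hyS : ∀ s ∈ S, py * s ∈ S := by
  intro s hs
  simp only [S, Set.mem_insert_iff, Set.mem_singleton_iff] at hs ⊢
  rcases hs with rfl|rfl|rfl|rfl|rfl|rfl|rfl|rfl|rfl|rfl|rfl|rfl|rfl|rfl|rfl|rfl <;>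
    simp only [mul_one, one_mul, mul_assoc, lxx, lyy, lzz, lxzt, lyzt, bt, b2,
      hx2, hy2, hz2, hxz, hyz] <;> tauto

lemma hzS : ∀ s ∈ S, pz * s ∈ S := by
  intro s hs
  simp only [S, Set.mem_insert_iff, Set.mem_singleton_iff] at hs ⊢
  rcases hs with rfl|rfl|rfl|rfl|rfl|rfl|rfl|rfl|rfl|rfl|rfl|rfl|rfl|rfl|rfl|rfl <;>
    simp only [mul_one, one_mul, mul_assoc, lxx, lyy, lzz, lxzt, lyzt, bt, b2,
      hx2, hy2, hz2, hxz, hyz] <;> tauto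

/-- The auxiliary subgroup used to show every element lies in `S`. -/
def T : Subgroup (PresentedGroup rels) where
  carrier := {g | ∀ s ∈ S, g * s ∈ S ∧ g⁻¹ * s ∈ S}
  one_mem' := by intro s hs; exact ⟨by simpa using hs, by simpa using hs⟩
  mul_mem' := by
    intro a b ha hb s hs
    refine ⟨?_, ?_⟩
    · rw [mul_assoc]; exact (ha _ (hb s hs).1).1
    · rw [_root_.mul_inv_rev, mul_assoc]; exact (hb _ (ha s hs).2).2
  inv_mem' := by
    intro a ha s hs
    exact ⟨(ha s hs).2, by rw [inv_inv]; exact (ha s hs).1⟩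

lemma hxT : px ∈ T := by
  show ∀ s ∈ S, px * s ∈ S ∧ px⁻¹ * s ∈ S
  exact fun s hs => ⟨hxS s hs, by rw [xinv]; exact hxS s hs⟩

lemma hyT : py ∈ T := by
  show ∀ s ∈ S, py * s ∈ S ∧ py⁻¹ * s ∈ S
  exact fun s hs => ⟨hyS s hs, by rw [yinv]; exact hyS s hs⟩

lemma hzT : pz ∈ T := by
  show ∀ s ∈ S, pz * s ∈ S ∧ pz⁻¹ * s ∈ S
  exact fun s hs => ⟨hzS s hs, by rw [zinv]; exact hzS s hs⟩

lemma mem_S (g : PresentedGroup rels) : g ∈ S := by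
  have hT : ∀ h : PresentedGroup rels, h ∈ T := by
    have hle : (⊤ : Subgroup (PresentedGroup rels)) ≤ T := by
      rw [← PresentedGroup.closure_range_of rels]
      refine (Subgroup.closure_le T).mpr ?_
      rintro g ⟨i, rfl⟩
      fin_cases i
      · exact hxT
      · exact hyT
      · exact hzT
    exact fun h => hle trivial
  have h1 : (1 : PresentedGroup rels) ∈ S := Set.mem_insert _ _
  simpa using (hT g 1 h1).1

end GFProof2
section GFProof3

open PresentedGroup

lemma perm_ne1 {σ : Equiv.Perm PM2} (q : PM2) (h : σ q ≠ q) : σ ≠ 1 :=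
  fun e => h (by rw [e]; rfl)

/-- The canonical homomorphism from the presented group. -/
def φGF : PresentedGroup rels →* Equiv.Perm PM2 := PresentedGroup.toGroup hrels

lemma phix : φGF px = qMinus := PresentedGroup.toGroup.of hrels
lemma phiy : φGF py = qRot := PresentedGroup.toGroup.of hrels
lemma phiz : φGF pz = qStar := PresentedGroup.toGroup.of hrels

lemma phi_inj : Function.Injective φGF := by
  refine (injective_iff_map_eq_one φGF).mpr ?_
  intro g hg
  have hS := mem_S g
  simp only [S, Set.mem_insert_iff, Set.mem_singleton_iff] at hS
  rcases hS with rfl|rfl|rfl|rfl|rfl|rfl|rfl|rfl|rfl|rfl|rfl|rfl|rfl|rfl|rfl|rfl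
  · rfl
  all_goals (
    exfalso
    simp only [_root_.map_mul, phix, phiy, phiz] at hg
    exact perm_ne1 (Quotient.mk pmSetoid !![(1:ℤ),2;3,5])
      (@of_decide_eq_true _ (instDecidableNot (dp := instDecidableEqPM2 _ _)) rfl) hg)

lemma phi_range : φGF.range = Subgroup.closure ({qMinus, qRot, qStar} : Set (Equiv.Perm PM2)) := by
  have himg : (⇑φGF '' Set.range (PresentedGroup.of : Fin 3 → PresentedGroup rels)) =
      ({qMinus, qRot, qStar} : Set (Equiv.Perm PM2)) := by
    ext g
    simp only [Set.mem_insert_iff, Set.mem_singleton_iff]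
    constructor
    · rintro ⟨_, ⟨i, rfl⟩, rfl⟩
      fin_cases i
      · exact Or.inl phix
      · exact Or.inr (Or.inl phiy)
      · exact Or.inr (Or.inr phiz)
    · rintro (rfl | rfl | rfl)
      exacts [⟨px, ⟨0, rfl⟩, phix⟩, ⟨py, ⟨1, rfl⟩, phiy⟩, ⟨pz, ⟨2, rfl⟩, phiz⟩]
  rw [MonoidHom.range_eq_map, ← PresentedGroup.closure_range_of rels,
    MonoidHom.map_closure, himg]

end GFProof3

theorem GF_presentation :
    ∃ φ : PresentedGroup rels ≃*
        ↥(Subgroup.closure ({qMinus, qRot, qStar} : Set (Equiv.Perm PM2))),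
      ((φ (PresentedGroup.of 0) : Equiv.Perm PM2) = qMinus ∧
       (φ (PresentedGroup.of 1) : Equiv.Perm PM2) = qRot ∧
       (φ (PresentedGroup.of 2) : Equiv.Perm PM2) = qStar) := by
  refine ⟨(MulEquiv.ofBijective φGF.rangeRestrict
      ⟨fun a b h => phi_inj (congrArg Subtype.val h), φGF.rangeRestrict_surjective⟩).trans
      (MulEquiv.subgroupCongr phi_range), ?_, ?_, ?_⟩
  · exact phix
  · exact phiy
  · exact phiz
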